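/- Let G = Pₙ be the path on n+1 vertices with endpoints u and v, and consider Bernoulli bond percolation on the bunkbed graph G± with every edge open with probability 1 − q. Then P(u₋ ↔ v₋) − P(u₋ ↔ v₊) = q^{n+1}(1 − q)^n for all q ∈ [0,1]. -/

import Mathlib

open SimpleGraph Finset
open scoped Classical

variable {V : Type*}

/-- The bunkbed graph `G □ K₂`: vertex `(x, false)` is `x₋`, vertex `(x, true)` is `x₊`. -/
def bunkbed (G : SimpleGraph V) : SimpleGraph (V × Bool) where
  Adj a b := (a.2 = b.2 ∧ G.Adj a.1 b.1) ∨ (a.1 = b.1 ∧ a.2 ≠ b.2)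
  symm := ⟨by
    rintro ⟨x, s⟩ ⟨y, t⟩ (⟨h1, h2⟩ | ⟨h1, h2⟩)
    · exact Or.inl ⟨h1.symm, h2.symm⟩
    · exact Or.inr ⟨h1.symm, Ne.symm h2⟩⟩
  loopless := ⟨by
    rintro ⟨x, s⟩ (⟨_, h⟩ | ⟨_, h⟩)
    · exact G.irrefl h
    · exact h rfl⟩

/-- `supp A = {x : h_x(A) = 1}`, i.e. exactly one of `x₋, x₊` lies in `A`. -/
def supp (A : Set (V × Bool)) : Set V := {x | Xor' ((x, false) ∈ A) ((x, true) ∈ A)}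

/-- Edge boundary of a vertex set in a graph. -/
def bdry {W : Type*} (H : SimpleGraph W) (A : Set W) : Set (Sym2 W) :=
  {e | e ∈ H.edgeSet ∧ ∃ x y, e = s(x, y) ∧ x ∈ A ∧ y ∉ A}

/-- The induced restriction of `G` to a vertex set `S`, as a graph on `V`. -/
def within (G : SimpleGraph V) (S : Set V) : SimpleGraph V where
  Adj a b := G.Adj a b ∧ a ∈ S ∧ b ∈ S
  symm := ⟨fun _ _ ⟨h, ha, hb⟩ => ⟨h.symm, hb, ha⟩⟩
  loopless := ⟨fun a ⟨h, _⟩ => G.irrefl h⟩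

/-- Probability of an event `Q` (a predicate on the set of open edges) under independent
bond percolation on `H` where edge `e` is open with probability `p e`. -/
noncomputable def prEvent {W : Type*} [Fintype W] (H : SimpleGraph W)
    (p : Sym2 W → ℝ) (Q : Finset (Sym2 W) → Prop) : ℝ :=
  ∑ ω ∈ H.edgeFinset.powerset,
    if Q ω then ∏ e ∈ H.edgeFinset, (if e ∈ ω then p e else 1 - p e) else 0

/-- The two-point function: probability that `a` and `b` are joined by a path of open edges. -/
noncomputable def prConn {W : Type*} [Fintype W] (H : SimpleGraph W)
    (p : Sym2 W → ℝ) (a b : W) : ℝ :=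
  prEvent H p fun ω => (SimpleGraph.fromEdgeSet (↑ω : Set (Sym2 W))).Reachable a b

namespace BB10
variable {n : ℕ}
abbrev VV (n : ℕ) := Fin (n + 1) × Bool
def botE (j : Fin n) : Sym2 (VV n) := s((j.castSucc, false), (j.succ, false))
def topE (j : Fin n) : Sym2 (VV n) := s((j.castSucc, true), (j.succ, true))
def rungE (j : Fin (n + 1)) : Sym2 (VV n) := s((j, false), (j, true))
noncomputable def EE (n : ℕ) : Finset (Sym2 (VV n)) :=
  (univ.image botE ∪ univ.image topE) ∪ univ.image rungE

lemma bunkbed_adj {G : SimpleGraph (Fin (n+1))} {a b : VV n} :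
    (bunkbed G).Adj a b ↔ (a.2 = b.2 ∧ G.Adj a.1 b.1) ∨ (a.1 = b.1 ∧ a.2 ≠ b.2) := Iff.rfl

lemma mem_EE_iff {e : Sym2 (VV n)} :
    e ∈ EE n ↔ (∃ j, e = botE j) ∨ (∃ j, e = topE j) ∨ (∃ j, e = rungE j) := by
  simp only [EE, mem_union, mem_image, mem_univ, true_and, eq_comm]
  tauto

lemma edgeFinset_eq : (bunkbed (SimpleGraph.pathGraph (n + 1))).edgeFinset = EE n := by
  ext e
  rw [mem_edgeFinset, mem_EE_iff]
  induction e using Sym2.ind with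
  | _ a b =>
    obtain ⟨x, s⟩ := a; obtain ⟨y, t⟩ := b
    rw [mem_edgeSet, bunkbed_adj]
    constructor
    · rintro (⟨hst, hadj⟩ | ⟨hxy, hst⟩)
      · simp only at hst; subst hst
        rw [pathGraph_adj] at hadj
        have hadj' : (x.val + 1 = y.val) ∨ (y.val + 1 = x.val) := hadj
        clear hadj
        rename' hadj' => hadj
        rcases hadj with h1 | h1
        · have hx : x.val < n := by have := y.isLt; omega
          have hc : (⟨x.val, hx⟩ : Fin n).castSucc = x := by ext; simp
          have hs : (⟨x.val, hx⟩ : Fin n).succ = y := by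
            ext; simp only [Fin.val_succ]; exact h1
          cases s with
          | false => exact Or.inl ⟨⟨x.val, hx⟩, by rw [botE, hc, hs]⟩
          | true => exact Or.inr (Or.inl ⟨⟨x.val, hx⟩, by rw [topE, hc, hs]⟩)
        · have hy : y.val < n := by have := x.isLt; omega
          have hc : (⟨y.val, hy⟩ : Fin n).castSucc = y := by ext; simp
          have hs : (⟨y.val, hy⟩ : Fin n).succ = x := by
            ext; simp only [Fin.val_succ]; exact h1
          cases s with
          | false => exact Or.inl ⟨⟨y.val, hy⟩, by rw [botE, hc, hs, Sym2.eq_swap]⟩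
          | true => exact Or.inr (Or.inl ⟨⟨y.val, hy⟩, by rw [topE, hc, hs, Sym2.eq_swap]⟩)
      · simp only at hxy hst; subst hxy
        cases s with
        | false =>
          have ht : t = true := by simpa using (Ne.symm hst)
          subst ht
          exact Or.inr (Or.inr ⟨x, by rw [rungE]⟩)
        | true =>
          have ht : t = false := by simpa using (Ne.symm hst)
          subst ht
          exact Or.inr (Or.inr ⟨x, by rw [rungE, Sym2.eq_swap]⟩)
    · rintro (⟨j, hj⟩ | ⟨j, hj⟩ | ⟨j, hj⟩) <;>
        simp only [botE, topE, rungE, Sym2.eq_iff, Prod.ext_iff] at hj <;>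
        rcases hj with ⟨⟨hx, hs⟩, ⟨hy, ht⟩⟩ | ⟨⟨hx, hs⟩, ⟨hy, ht⟩⟩ <;>
        subst hx <;> subst hy <;> subst hs <;> subst ht <;>
        simp [pathGraph_adj, Fin.ext_iff]

lemma mem_EE_botE (j : Fin n) : botE j ∈ EE n := mem_EE_iff.2 (Or.inl ⟨j, rfl⟩)
lemma mem_EE_topE (j : Fin n) : topE j ∈ EE n := mem_EE_iff.2 (Or.inr (Or.inl ⟨j, rfl⟩))
lemma mem_EE_rungE (j : Fin (n + 1)) : rungE j ∈ EE n := mem_EE_iff.2 (Or.inr (Or.inr ⟨j, rfl⟩))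

lemma botE_inj : Function.Injective (botE (n := n)) := by
  intro a b h
  rw [botE, botE, Sym2.eq_iff] at h
  rcases h with ⟨h1, _⟩ | ⟨h1, h2⟩ <;>
    simp_all [Prod.ext_iff, Fin.ext_iff, Fin.val_succ] <;> omega

lemma topE_inj : Function.Injective (topE (n := n)) := by
  intro a b h
  rw [topE, topE, Sym2.eq_iff] at h
  rcases h with ⟨h1, _⟩ | ⟨h1, h2⟩ <;>
    simp_all [Prod.ext_iff, Fin.ext_iff, Fin.val_succ] <;> omega

lemma rungE_inj : Function.Injective (rungE (n := n)) := by
  intro a b h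
  rw [rungE, rungE, Sym2.eq_iff] at h
  rcases h with ⟨h1, _⟩ | ⟨h1, h2⟩ <;> simp_all [Prod.ext_iff]

lemma botE_ne_topE (j k : Fin n) : botE j ≠ topE k := by
  rw [botE, topE, Ne, Sym2.eq_iff]
  rintro (⟨h, -⟩ | ⟨h, -⟩) <;> simp [Prod.ext_iff] at h

lemma botE_ne_rungE (j : Fin n) (k : Fin (n + 1)) : botE j ≠ rungE k := by
  rw [botE, rungE, Ne, Sym2.eq_iff]
  rintro (⟨-, h⟩ | ⟨h, -⟩) <;> simp [Prod.ext_iff] at h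

lemma topE_ne_rungE (j : Fin n) (k : Fin (n + 1)) : topE j ≠ rungE k := by
  rw [topE, rungE, Ne, Sym2.eq_iff]
  rintro (⟨h, -⟩ | ⟨-, h⟩) <;> simp [Prod.ext_iff] at h

/-- Flip the level of a vertex. -/
def flipV (x : VV n) : VV n := (x.1, !x.2)

/-- Flip the level of an edge. -/
def fe (e : Sym2 (VV n)) : Sym2 (VV n) := Sym2.map flipV e

lemma fe_botE (j : Fin n) : fe (botE j) = topE j := by
  simp [fe, botE, topE, Sym2.map_pair_eq, flipV]

lemma fe_topE (j : Fin n) : fe (topE j) = botE j := by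
  simp [fe, botE, topE, Sym2.map_pair_eq, flipV]

lemma fe_rungE (j : Fin (n + 1)) : fe (rungE j) = rungE j := by
  simp only [fe, rungE, Sym2.map_pair_eq, flipV]
  exact Sym2.eq_swap

lemma fe_fe (e : Sym2 (VV n)) : fe (fe e) = e := by
  induction e using Sym2.ind with
  | _ a b => simp [fe, Sym2.map_pair_eq, flipV]

/-- Keep predicate: horizontal edges whose columns are both `≤ i`. -/
def Keep (i : Fin (n + 1)) (e : Sym2 (VV n)) : Prop :=
  ∃ j : Fin n, j.val < i.val ∧ (e = botE j ∨ e = topE j)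

/-- The flip map at threshold `i`: horizontal edges between columns `j, j+1` with
`j ≥ i` get their level flipped, everything else is fixed. -/
noncomputable def g (i : Fin (n + 1)) (e : Sym2 (VV n)) : Sym2 (VV n) :=
  if Keep i e then e else fe e

lemma Keep_fe {i : Fin (n + 1)} {e : Sym2 (VV n)} (h : Keep i (fe e)) : Keep i e := by
  obtain ⟨j, hj, hc | hc⟩ := h
  · exact ⟨j, hj, Or.inr (by rw [← fe_fe e, hc, fe_botE])⟩
  · exact ⟨j, hj, Or.inl (by rw [← fe_fe e, hc, fe_topE])⟩

lemma g_g (i : Fin (n + 1)) (e : Sym2 (VV n)) : g i (g i e) = e := by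
  by_cases h : Keep i e
  · have he : g i e = e := by rw [g, if_pos h]
    rw [he, he]
  · have he : g i e = fe e := by rw [g, if_neg h]
    rw [he, g, if_neg (fun hk => h (Keep_fe hk)), fe_fe]

lemma g_botE (i : Fin (n + 1)) (j : Fin n) :
    g i (botE j) = if j.val < i.val then botE j else topE j := by
  by_cases h : j.val < i.val
  · rw [if_pos h, g, if_pos ⟨j, h, Or.inl rfl⟩]
  · rw [if_neg h, g, if_neg, fe_botE]
    rintro ⟨k, hk, hc | hc⟩
    · exact h (botE_inj hc.symm ▸ hk)
    · exact botE_ne_topE j k hc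
lemma g_topE (i : Fin (n + 1)) (j : Fin n) :
    g i (topE j) = if j.val < i.val then topE j else botE j := by
  by_cases h : j.val < i.val
  · rw [if_pos h, g, if_pos ⟨j, h, Or.inr rfl⟩]
  · rw [if_neg h, g, if_neg, fe_topE]
    rintro ⟨k, hk, hc | hc⟩
    · exact (botE_ne_topE k j hc.symm)
    · exact h (topE_inj hc.symm ▸ hk)

lemma g_rungE (i : Fin (n + 1)) (j : Fin (n + 1)) : g i (rungE j) = rungE j := by
  rw [g, if_neg, fe_rungE]
  rintro ⟨k, -, hc | hc⟩
  · exact botE_ne_rungE k j hc.symm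
  · exact topE_ne_rungE k j hc.symm

lemma g_mem_EE {i : Fin (n + 1)} {e : Sym2 (VV n)} (he : e ∈ EE n) : g i e ∈ EE n := by
  rcases mem_EE_iff.1 he with ⟨j, rfl⟩ | ⟨j, rfl⟩ | ⟨j, rfl⟩
  · rw [g_botE]; split <;> [exact mem_EE_botE j; exact mem_EE_topE j]
  · rw [g_topE]; split <;> [exact mem_EE_topE j; exact mem_EE_botE j]
  · rw [g_rungE]; exact mem_EE_rungE j

/-- The configuration flip. -/
noncomputable def σf (i : Fin (n + 1)) (ω : Finset (Sym2 (VV n))) : Finset (Sym2 (VV n)) :=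
  ω.image (g i)

lemma mem_σf {i : Fin (n + 1)} {ω : Finset (Sym2 (VV n))} {e : Sym2 (VV n)} :
    e ∈ σf i ω ↔ g i e ∈ ω := by
  simp only [σf, mem_image]
  constructor
  · rintro ⟨a, ha, rfl⟩; rwa [g_g]
  · intro h; exact ⟨g i e, h, g_g i e⟩

lemma σf_σf (i : Fin (n + 1)) (ω : Finset (Sym2 (VV n))) : σf i (σf i ω) = ω := by
  ext e; rw [mem_σf, mem_σf, g_g]

lemma σf_subset {i : Fin (n + 1)} {ω : Finset (Sym2 (VV n))} (h : ω ⊆ EE n) :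
    σf i ω ⊆ EE n := by
  intro e he
  rw [mem_σf] at he
  have := g_mem_EE (i := i) (h he)
  rwa [g_g] at this

lemma rungE_mem_σf {i : Fin (n + 1)} {ω : Finset (Sym2 (VV n))} {k : Fin (n + 1)} :
    rungE k ∈ σf i ω ↔ rungE k ∈ ω := by
  rw [mem_σf, g_rungE]


/-! ### Reachability lemmas -/

lemma reach_ind {W : Type*} {H : SimpleGraph W} {P : W → Prop}
    (hP : ∀ x y, H.Adj x y → P x → P y) {a b : W} (h : H.Reachable a b) (ha : P a) : P b := by
  obtain ⟨w⟩ := h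
  induction w with
  | nil => exact ha
  | cons h' p ih => exact ih (hP _ _ h' ha)

variable {ω : Finset (Sym2 (VV n))}

lemma snd_eq_of_reachable (hsub : ω ⊆ EE n) (hno : ∀ k, rungE k ∉ ω) {a b : VV n}
    (h : (fromEdgeSet (↑ω : Set (Sym2 (VV n)))).Reachable a b) : a.2 = b.2 := by
  refine (reach_ind (P := fun x => x.2 = a.2) ?_ h rfl).symm
  intro x y hxy hx
  rw [fromEdgeSet_adj] at hxy
  obtain ⟨hmem, -⟩ := hxy
  rcases mem_EE_iff.1 (hsub hmem) with ⟨j, hj⟩ | ⟨j, hj⟩ | ⟨j, hj⟩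
  · rw [botE, Sym2.eq_iff] at hj
    rcases hj with ⟨h1, h2⟩ | ⟨h1, h2⟩ <;> rw [← hx] <;>
      rw [Prod.ext_iff] at h1 h2 <;> rw [h1.2, h2.2]
  · rw [topE, Sym2.eq_iff] at hj
    rcases hj with ⟨h1, h2⟩ | ⟨h1, h2⟩ <;> rw [← hx] <;>
      rw [Prod.ext_iff] at h1 h2 <;> rw [h1.2, h2.2]
  · exact absurd (hj ▸ hmem) (hno j)

lemma reach_bot_of_all (hall : ∀ j : Fin n, botE j ∈ ω) :
    ∀ m : ℕ, (hm : m ≤ n) →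
      (fromEdgeSet (↑ω : Set (Sym2 (VV n)))).Reachable ((0 : Fin (n + 1)), false)
        ((⟨m, by omega⟩ : Fin (n + 1)), false) := by
  intro m
  induction m with
  | zero => intro _; exact Reachable.refl _
  | succ m ih =>
    intro hm
    have hmn : m < n := by omega
    refine (ih (by omega)).trans (Adj.reachable ?_)
    rw [fromEdgeSet_adj]
    constructor
    · have : s(((⟨m, by omega⟩ : Fin (n + 1)), false), ((⟨m + 1, by omega⟩ : Fin (n + 1)), false))
          = botE ⟨m, hmn⟩ := by
        rw [botE]
        congr 1
      rw [this]; exact hall _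
    · intro hcon
      have : m = m + 1 := congrArg (fun p : VV n => p.1.val) hcon
      omega

lemma reach_bot_iff (hsub : ω ⊆ EE n) (hno : ∀ k, rungE k ∉ ω) :
    (fromEdgeSet (↑ω : Set (Sym2 (VV n)))).Reachable ((0 : Fin (n + 1)), false)
        (Fin.last n, false) ↔ ∀ j : Fin n, botE j ∈ ω := by
  constructor
  · intro h
    by_contra hcon
    push_neg at hcon
    obtain ⟨j, hj⟩ := hcon
    have hlast := reach_ind (P := fun x : VV n => x.2 = false ∧ x.1.val ≤ j.val) ?_ h
      ⟨rfl, by simp⟩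
    · have := hlast.2
      simp only [Fin.val_last] at this
      omega
    · rintro x y hxy ⟨hx2, hx1⟩
      rw [fromEdgeSet_adj] at hxy
      obtain ⟨hmem, -⟩ := hxy
      have hmem : s(x, y) ∈ ω := hmem
      rcases mem_EE_iff.1 (hsub hmem) with ⟨k, hk⟩ | ⟨k, hk⟩ | ⟨k, hk⟩
      · have hkj : k ≠ j := fun h => hj (by rw [← h, ← hk]; exact hmem)
        rw [botE, Sym2.eq_iff] at hk
        rcases hk with ⟨h1, h2⟩ | ⟨h1, h2⟩ <;> rw [Prod.ext_iff, Fin.ext_iff] at h1 h2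
        · refine ⟨h2.2, ?_⟩
          rw [h2.1, Fin.val_succ]
          have : k.val ≠ j.val := fun hv => hkj (Fin.ext hv)
          rw [h1.1, Fin.coe_castSucc] at hx1
          omega
        · refine ⟨h2.2, ?_⟩
          rw [h2.1, Fin.coe_castSucc]
          rw [h1.1, Fin.val_succ] at hx1
          omega
      · exfalso
        rw [topE, Sym2.eq_iff] at hk
        rcases hk with ⟨h1, -⟩ | ⟨h1, -⟩ <;> rw [Prod.ext_iff] at h1 <;>
          rw [hx2] at h1 <;> exact Bool.false_ne_true h1.2
      · exact absurd (by rw [← hk]; exact hmem : rungE k ∈ ω) (hno k)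
  · intro hall
    exact reach_bot_of_all hall n le_rfl

/-! ### The surgery -/

def τ (i : Fin (n + 1)) (x : VV n) : VV n := if i < x.1 then (x.1, !x.2) else x

lemma τ_fst (i : Fin (n + 1)) (x : VV n) : (τ i x).1 = x.1 := by
  rw [τ]; split <;> rfl

lemma τ_τ (i : Fin (n + 1)) (x : VV n) : τ i (τ i x) = x := by
  rw [τ, τ]
  by_cases h : i < x.1
  · rw [if_pos h]
    simp only [if_pos h, Bool.not_not]
  · rw [if_neg h, if_neg h]

lemma τ_pos {i k : Fin (n + 1)} (h : i.val < k.val) (s : Bool) :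
    τ i ((k, s) : VV n) = (k, !s) := by
  rw [τ, if_pos (Fin.lt_def.mpr h)]

lemma τ_neg {i k : Fin (n + 1)} (h : ¬i.val < k.val) (s : Bool) :
    τ i ((k, s) : VV n) = (k, s) := by
  rw [τ, if_neg (fun hl => h (Fin.lt_def.mp hl))]

lemma adj_of_mem {ω' : Finset (Sym2 (VV n))} {a b : VV n} (h : s(a, b) ∈ ω') (hne : a ≠ b) :
    (fromEdgeSet (↑ω' : Set (Sym2 (VV n)))).Adj a b := by
  rw [fromEdgeSet_adj]; exact ⟨h, hne⟩

lemma cs_ne_succ (j : Fin n) (s t : Bool) : ((j.castSucc, s) : VV n) ≠ (j.succ, t) := by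
  intro h
  have := congrArg (fun p : VV n => p.1.val) h
  simp only [Fin.coe_castSucc, Fin.val_succ] at this
  omega

lemma vert_ne (k : Fin (n + 1)) : ((k, false) : VV n) ≠ (k, true) := by
  intro h
  exact Bool.false_ne_true (congrArg Prod.snd h)

lemma surgery_bot {i : Fin (n + 1)} (hr : rungE i ∈ ω) (j : Fin n) (hb : botE j ∈ ω) :
    (fromEdgeSet (↑(σf i ω) : Set (Sym2 (VV n)))).Reachable
      (τ i (j.castSucc, false)) (τ i (j.succ, false)) := by
  rcases Nat.lt_trichotomy j.val i.val with hc | hc | hc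
  · have t1 : τ i ((j.castSucc, false) : VV n) = (j.castSucc, false) := by
      exact τ_neg (by rw [Fin.coe_castSucc]; omega) _
    have t2 : τ i ((j.succ, false) : VV n) = (j.succ, false) := by
      exact τ_neg (by rw [Fin.val_succ]; omega) _
    have mem : botE j ∈ σf i ω := mem_σf.2 (by rw [g_botE, if_pos hc]; exact hb)
    rw [t1, t2]
    exact (adj_of_mem (show s(((j.castSucc, false) : VV n), (j.succ, false)) ∈ σf i ω from mem)
      (cs_ne_succ j false false)).reachable
  · have t1 : τ i ((j.castSucc, false) : VV n) = (j.castSucc, false) := by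
      exact τ_neg (by rw [Fin.coe_castSucc]; omega) _
    have t2 : τ i ((j.succ, false) : VV n) = (j.succ, true) := by
      exact τ_pos (by rw [Fin.val_succ]; omega) _
    have hcs : i = j.castSucc := Fin.ext (by rw [Fin.coe_castSucc]; omega)
    have memr : rungE j.castSucc ∈ σf i ω := by
      rw [← hcs]; exact rungE_mem_σf.2 hr
    have memt : topE j ∈ σf i ω := mem_σf.2 (by rw [g_topE, if_neg (by omega)]; exact hb)
    rw [t1, t2]
    refine (adj_of_mem (show s(((j.castSucc, false) : VV n), (j.castSucc, true)) ∈ σf i ω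
      from memr) (vert_ne _)).reachable.trans ?_
    exact (adj_of_mem (show s(((j.castSucc, true) : VV n), (j.succ, true)) ∈ σf i ω from memt)
      (cs_ne_succ j true true)).reachable
  · have t1 : τ i ((j.castSucc, false) : VV n) = (j.castSucc, true) := by
      exact τ_pos (by rw [Fin.coe_castSucc]; omega) _
    have t2 : τ i ((j.succ, false) : VV n) = (j.succ, true) := by
      exact τ_pos (by rw [Fin.val_succ]; omega) _
    have memt : topE j ∈ σf i ω := mem_σf.2 (by rw [g_topE, if_neg (by omega)]; exact hb)
    rw [t1, t2]
    exact (adj_of_mem (show s(((j.castSucc, true) : VV n), (j.succ, true)) ∈ σf i ω from memt)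
      (cs_ne_succ j true true)).reachable

lemma surgery_top {i : Fin (n + 1)} (hr : rungE i ∈ ω) (j : Fin n) (ht : topE j ∈ ω) :
    (fromEdgeSet (↑(σf i ω) : Set (Sym2 (VV n)))).Reachable
      (τ i (j.castSucc, true)) (τ i (j.succ, true)) := by
  rcases Nat.lt_trichotomy j.val i.val with hc | hc | hc
  · have t1 : τ i ((j.castSucc, true) : VV n) = (j.castSucc, true) := by
      exact τ_neg (by rw [Fin.coe_castSucc]; omega) _
    have t2 : τ i ((j.succ, true) : VV n) = (j.succ, true) := by
      exact τ_neg (by rw [Fin.val_succ]; omega) _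
    have mem : topE j ∈ σf i ω := mem_σf.2 (by rw [g_topE, if_pos hc]; exact ht)
    rw [t1, t2]
    exact (adj_of_mem (show s(((j.castSucc, true) : VV n), (j.succ, true)) ∈ σf i ω from mem)
      (cs_ne_succ j true true)).reachable
  · have t1 : τ i ((j.castSucc, true) : VV n) = (j.castSucc, true) := by
      exact τ_neg (by rw [Fin.coe_castSucc]; omega) _
    have t2 : τ i ((j.succ, true) : VV n) = (j.succ, false) := by
      exact τ_pos (by rw [Fin.val_succ]; omega) _
    have hcs : i = j.castSucc := Fin.ext (by rw [Fin.coe_castSucc]; omega)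
    have memr : rungE j.castSucc ∈ σf i ω := by
      rw [← hcs]; exact rungE_mem_σf.2 hr
    have memb : botE j ∈ σf i ω := mem_σf.2 (by rw [g_botE, if_neg (by omega)]; exact ht)
    rw [t1, t2]
    have step1 : (fromEdgeSet (↑(σf i ω) : Set (Sym2 (VV n)))).Adj
        ((j.castSucc, true) : VV n) (j.castSucc, false) := by
      refine adj_of_mem ?_ (Ne.symm (vert_ne _))
      rw [Sym2.eq_swap]
      exact memr
    refine step1.reachable.trans ?_
    exact (adj_of_mem (show s(((j.castSucc, false) : VV n), (j.succ, false)) ∈ σf i ω from memb)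
      (cs_ne_succ j false false)).reachable
  · have t1 : τ i ((j.castSucc, true) : VV n) = (j.castSucc, false) := by
      exact τ_pos (by rw [Fin.coe_castSucc]; omega) _
    have t2 : τ i ((j.succ, true) : VV n) = (j.succ, false) := by
      exact τ_pos (by rw [Fin.val_succ]; omega) _
    have memb : botE j ∈ σf i ω := mem_σf.2 (by rw [g_botE, if_neg (by omega)]; exact ht)
    rw [t1, t2]
    exact (adj_of_mem (show s(((j.castSucc, false) : VV n), (j.succ, false)) ∈ σf i ω from memb)
      (cs_ne_succ j false false)).reachable

lemma surgery_rung {i : Fin (n + 1)} (k : Fin (n + 1)) (hk : rungE k ∈ ω) :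
    (fromEdgeSet (↑(σf i ω) : Set (Sym2 (VV n)))).Reachable
      (τ i (k, false)) (τ i (k, true)) := by
  have mem : rungE k ∈ σf i ω := rungE_mem_σf.2 hk
  by_cases h : i < k
  · have t1 : τ i ((k, false) : VV n) = (k, true) := τ_pos (Fin.lt_def.mp h) _
    have t2 : τ i ((k, true) : VV n) = (k, false) := τ_pos (Fin.lt_def.mp h) _
    rw [t1, t2]
    refine (adj_of_mem ?_ (Ne.symm (vert_ne _))).reachable
    rw [Sym2.eq_swap]
    exact mem
  · have t1 : τ i ((k, false) : VV n) = (k, false) := τ_neg (fun hl => h (Fin.lt_def.mpr hl)) _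
    have t2 : τ i ((k, true) : VV n) = (k, true) := τ_neg (fun hl => h (Fin.lt_def.mpr hl)) _
    rw [t1, t2]
    exact (adj_of_mem (show s(((k, false) : VV n), (k, true)) ∈ σf i ω from mem)
      (vert_ne _)).reachable

lemma surgery {i : Fin (n + 1)} (hsub : ω ⊆ EE n) (hr : rungE i ∈ ω) {x y : VV n}
    (hxy : (fromEdgeSet (↑ω : Set (Sym2 (VV n)))).Adj x y) :
    (fromEdgeSet (↑(σf i ω) : Set (Sym2 (VV n)))).Reachable (τ i x) (τ i y) := by
  rw [fromEdgeSet_adj] at hxy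
  obtain ⟨hmem, hne⟩ := hxy
  have hmem : s(x, y) ∈ ω := hmem
  rcases mem_EE_iff.1 (hsub hmem) with ⟨j, hj⟩ | ⟨j, hj⟩ | ⟨j, hj⟩
  · have hb : botE j ∈ ω := by rw [← hj]; exact hmem
    rw [botE, Sym2.eq_iff] at hj
    rcases hj with ⟨h1, h2⟩ | ⟨h1, h2⟩
    · rw [h1, h2]; exact surgery_bot hr j hb
    · rw [h1, h2]; exact (surgery_bot hr j hb).symm
  · have ht : topE j ∈ ω := by rw [← hj]; exact hmem
    rw [topE, Sym2.eq_iff] at hj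
    rcases hj with ⟨h1, h2⟩ | ⟨h1, h2⟩
    · rw [h1, h2]; exact surgery_top hr j ht
    · rw [h1, h2]; exact (surgery_top hr j ht).symm
  · have hk : rungE j ∈ ω := by rw [← hj]; exact hmem
    rw [rungE, Sym2.eq_iff] at hj
    rcases hj with ⟨h1, h2⟩ | ⟨h1, h2⟩
    · rw [h1, h2]; exact surgery_rung j hk
    · rw [h1, h2]; exact (surgery_rung j hk).symm

lemma reach_map {i : Fin (n + 1)} (hsub : ω ⊆ EE n) (hr : rungE i ∈ ω) {a b : VV n}
    (h : (fromEdgeSet (↑ω : Set (Sym2 (VV n)))).Reachable a b) :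
    (fromEdgeSet (↑(σf i ω) : Set (Sym2 (VV n)))).Reachable (τ i a) (τ i b) :=
  reach_ind (P := fun x => (fromEdgeSet (↑(σf i ω) : Set (Sym2 (VV n)))).Reachable
    (τ i a) (τ i x)) (fun _ _ hxy hx => hx.trans (surgery hsub hr hxy)) h (Reachable.refl _)


lemma g_last {e : Sym2 (VV n)} (he : e ∈ EE n) : g (Fin.last n) e = e := by
  rcases mem_EE_iff.1 he with ⟨j, rfl⟩ | ⟨j, rfl⟩ | ⟨j, rfl⟩
  · rw [g_botE, if_pos (by rw [Fin.val_last]; exact j.isLt)]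
  · rw [g_topE, if_pos (by rw [Fin.val_last]; exact j.isLt)]
  · exact g_rungE _ _

lemma σf_last (hsub : ω ⊆ EE n) : σf (Fin.last n) ω = ω := by
  ext e
  rw [mem_σf]
  constructor
  · intro h
    have h2 := g_last (hsub h)
    rw [← g_g (Fin.last n) e, h2]
    exact h
  · intro h
    rw [g_last (hsub h)]
    exact h

lemma main_iff {i : Fin (n + 1)} (hsub : ω ⊆ EE n) (hr : rungE i ∈ ω) :
    (fromEdgeSet (↑ω : Set (Sym2 (VV n)))).Reachable ((0 : Fin (n + 1)), false)
        (Fin.last n, false) ↔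
      (fromEdgeSet (↑(σf i ω) : Set (Sym2 (VV n)))).Reachable ((0 : Fin (n + 1)), false)
        (Fin.last n, true) := by
  by_cases hi : i.val < n
  · have tu : τ i (((0 : Fin (n + 1)), false) : VV n) = ((0 : Fin (n + 1)), false) :=
      τ_neg (by simp) _
    have tv : τ i ((Fin.last n, false) : VV n) = (Fin.last n, true) :=
      τ_pos (by rw [Fin.val_last]; exact hi) _
    have tv' : τ i ((Fin.last n, true) : VV n) = (Fin.last n, false) :=
      τ_pos (by rw [Fin.val_last]; exact hi) _
    constructor
    · intro h
      have := reach_map hsub hr h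
      rwa [tu, tv] at this
    · intro h
      have := reach_map (σf_subset hsub) (rungE_mem_σf.2 hr) h
      rwa [tu, tv', σf_σf] at this
  · have hi' : i = Fin.last n := Fin.ext (by rw [Fin.val_last]; have := i.isLt; omega)
    subst hi'
    rw [σf_last hsub]
    have adjv : (fromEdgeSet (↑ω : Set (Sym2 (VV n)))).Adj (Fin.last n, false)
        (Fin.last n, true) :=
      adj_of_mem (show s(((Fin.last n, false) : VV n), (Fin.last n, true)) ∈ ω from hr)
        (vert_ne _)
    exact ⟨fun h => h.trans adjv.reachable, fun h => h.trans adjv.symm.reachable⟩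

/-! ### The pairing -/

lemma rungfilter_σf {i : Fin (n + 1)} :
    (univ.filter fun k => rungE k ∈ σf i ω) = (univ.filter fun k => rungE k ∈ ω) := by
  ext k
  simp [rungE_mem_σf]

noncomputable def ℓ (ω : Finset (Sym2 (VV n))) : Fin (n + 1) :=
  if h : (univ.filter fun k => rungE k ∈ ω).Nonempty then
    (univ.filter fun k => rungE k ∈ ω).min' h else 0

lemma ℓ_mem (h : ∃ k, rungE k ∈ ω) : rungE (ℓ ω) ∈ ω := by
  obtain ⟨k, hk⟩ := h
  have hne : (univ.filter fun k => rungE k ∈ ω).Nonempty :=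
    ⟨k, mem_filter.2 ⟨mem_univ _, hk⟩⟩
  rw [ℓ, dif_pos hne]
  exact (mem_filter.1 (min'_mem _ hne)).2

lemma ℓ_σf {i : Fin (n + 1)} : ℓ (σf i ω) = ℓ ω := by
  simp only [ℓ, rungfilter_σf]

noncomputable def Sm (ω : Finset (Sym2 (VV n))) : Finset (Sym2 (VV n)) := σf (ℓ ω) ω

lemma Sm_Sm (ω : Finset (Sym2 (VV n))) : Sm (Sm ω) = ω := by
  rw [Sm, Sm, ℓ_σf, σf_σf]

lemma prod_σf {i : Fin (n + 1)} (a b : ℝ) :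
    (∏ e ∈ EE n, if e ∈ σf i ω then a else b) = ∏ e ∈ EE n, if e ∈ ω then a else b := by
  refine prod_nbij' (g i) (g i) (fun e he => g_mem_EE he) (fun e he => g_mem_EE he)
    (fun e _ => g_g i e) (fun e _ => g_g i e) ?_
  intro e _
  simp only [mem_σf]


/-! ### Weights and sums -/

noncomputable def w (qv : ℝ) (ω : Finset (Sym2 (VV n))) : ℝ :=
  ∏ e ∈ EE n, if e ∈ ω then 1 - qv else 1 - (1 - qv)

lemma w_Sm (qv : ℝ) (ω : Finset (Sym2 (VV n))) : w qv (Sm ω) = w qv ω := by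
  rw [w, w]; exact prod_σf _ _

lemma pair_sum (qv : ℝ) :
    (∑ ω ∈ (EE n).powerset.filter (fun ω => ∃ k, rungE k ∈ ω),
      if (fromEdgeSet (↑ω : Set (Sym2 (VV n)))).Reachable ((0 : Fin (n + 1)), false)
        (Fin.last n, false) then w qv ω else 0)
    = ∑ ω ∈ (EE n).powerset.filter (fun ω => ∃ k, rungE k ∈ ω),
      if (fromEdgeSet (↑ω : Set (Sym2 (VV n)))).Reachable ((0 : Fin (n + 1)), false)
        (Fin.last n, true) then w qv ω else 0 := by
  refine sum_nbij' Sm Sm ?_ ?_ (fun ω _ => Sm_Sm ω) (fun ω _ => Sm_Sm ω) ?_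
  · intro ω hω
    rw [mem_filter, mem_powerset] at hω ⊢
    obtain ⟨k, hk⟩ := hω.2
    exact ⟨σf_subset hω.1, ⟨k, rungE_mem_σf.2 hk⟩⟩
  · intro ω hω
    rw [mem_filter, mem_powerset] at hω ⊢
    obtain ⟨k, hk⟩ := hω.2
    exact ⟨σf_subset hω.1, ⟨k, rungE_mem_σf.2 hk⟩⟩
  · intro ω hω
    rw [mem_filter, mem_powerset] at hω
    have hiff := main_iff hω.1 (ℓ_mem hω.2)
    rw [w_Sm]
    exact if_congr hiff rfl rfl

lemma sum_powerset_prod {α : Type*} [DecidableEq α] (s : Finset α) (f g : α → ℝ) :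
    (∑ t ∈ s.powerset, ∏ e ∈ s, if e ∈ t then f e else g e) = ∏ e ∈ s, (f e + g e) := by
  rw [Finset.prod_add]
  refine sum_congr rfl fun t ht => ?_
  rw [mem_powerset] at ht
  have h1 : (∏ e ∈ s, if e ∈ t then f e else g e)
      = ∏ e ∈ t ∪ (s \ t), if e ∈ t then f e else g e := by
    rw [Finset.union_sdiff_of_subset ht]
  rw [h1, prod_union Finset.disjoint_sdiff]
  congr 1
  · exact prod_congr rfl fun e he => if_pos he
  · exact prod_congr rfl fun e he => if_neg (mem_sdiff.1 he).2

/-- Per-edge weight if the edge is open, constrained. -/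
noncomputable def fop (qv : ℝ) (e : Sym2 (VV n)) : ℝ :=
  if ∃ k, e = rungE k then 0 else 1 - qv

/-- Per-edge weight if the edge is closed, constrained. -/
noncomputable def fcl (qv : ℝ) (e : Sym2 (VV n)) : ℝ :=
  if ∃ k, e = rungE k then 1 - (1 - qv) else if ∃ j, e = botE j then 0 else 1 - (1 - qv)

lemma fop_bot (qv : ℝ) (j : Fin n) : fop qv (botE j) = 1 - qv :=
  if_neg (by rintro ⟨k, hk⟩; exact botE_ne_rungE j k hk)
lemma fop_top (qv : ℝ) (j : Fin n) : fop qv (topE j) = 1 - qv :=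
  if_neg (by rintro ⟨k, hk⟩; exact topE_ne_rungE j k hk)
lemma fop_rung (qv : ℝ) (k : Fin (n + 1)) : fop qv (rungE k) = 0 := if_pos ⟨k, rfl⟩
lemma fcl_bot (qv : ℝ) (j : Fin n) : fcl qv (botE j) = 0 := by
  rw [fcl, if_neg (by rintro ⟨k, hk⟩; exact botE_ne_rungE j k hk), if_pos ⟨j, rfl⟩]
lemma fcl_top (qv : ℝ) (j : Fin n) : fcl qv (topE j) = 1 - (1 - qv) := by
  rw [fcl, if_neg (by rintro ⟨k, hk⟩; exact topE_ne_rungE j k hk),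
    if_neg (by rintro ⟨j', hj⟩; exact botE_ne_topE j' j hj.symm)]
lemma fcl_rung (qv : ℝ) (k : Fin (n + 1)) : fcl qv (rungE k) = 1 - (1 - qv) :=
  if_pos ⟨k, rfl⟩

/-- The constrained product. -/
noncomputable def GW (qv : ℝ) (ω : Finset (Sym2 (VV n))) : ℝ :=
  ∏ e ∈ EE n, if e ∈ ω then fop qv e else fcl qv e

lemma GW_rung (qv : ℝ) (h : ∃ k, rungE k ∈ ω) : GW qv ω = 0 := by
  obtain ⟨k, hk⟩ := h
  refine prod_eq_zero (mem_EE_rungE k) ?_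
  rw [if_pos hk, fop_rung]

lemma GW_nobot (qv : ℝ) {j : Fin n} (hj : botE j ∉ ω) : GW qv ω = 0 := by
  refine prod_eq_zero (mem_EE_botE j) ?_
  rw [if_neg hj, fcl_bot]

lemma GW_eq_w (qv : ℝ) (hno : ∀ k, rungE k ∉ ω) (hall : ∀ j : Fin n, botE j ∈ ω) :
    GW qv ω = w qv ω := by
  refine prod_congr rfl fun e he => ?_
  rcases mem_EE_iff.1 he with ⟨j, rfl⟩ | ⟨j, rfl⟩ | ⟨j, rfl⟩
  · rw [if_pos (hall j), if_pos (hall j), fop_bot]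
  · by_cases h : topE j ∈ ω
    · rw [if_pos h, if_pos h, fop_top]
    · rw [if_neg h, if_neg h, fcl_top]
  · rw [if_neg (hno j), if_neg (hno j), fcl_rung]

lemma disj_bot_top : Disjoint (univ.image (botE (n := n))) (univ.image topE) := by
  rw [Finset.disjoint_left]
  intro e h1 h2
  simp only [mem_image, mem_univ, true_and] at h1 h2
  obtain ⟨a, ha⟩ := h1; obtain ⟨b, hb⟩ := h2
  exact botE_ne_topE a b (ha.trans hb.symm)

lemma disj_horiz_rung :
    Disjoint (univ.image (botE (n := n)) ∪ univ.image topE) (univ.image rungE) := by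
  rw [Finset.disjoint_left]
  intro e h1 h2
  simp only [mem_union, mem_image, mem_univ, true_and] at h1 h2
  obtain ⟨b, hb⟩ := h2
  rcases h1 with ⟨a, ha⟩ | ⟨a, ha⟩
  · exact botE_ne_rungE a b (ha.trans hb.symm)
  · exact topE_ne_rungE a b (ha.trans hb.symm)

lemma prod_plus (qv : ℝ) :
    (∏ e ∈ EE n, (fop qv e + fcl qv e)) = qv ^ (n + 1) * (1 - qv) ^ n := by
  rw [EE, prod_union disj_horiz_rung, prod_union disj_bot_top,
    prod_image (fun x _ y _ h => botE_inj h), prod_image (fun x _ y _ h => topE_inj h),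
    prod_image (fun x _ y _ h => rungE_inj h)]
  have hb : (∏ j : Fin n, (fop qv (botE j) + fcl qv (botE j))) = (1 - qv) ^ n := by
    rw [prod_congr rfl fun j _ => by rw [fop_bot, fcl_bot, add_zero], prod_const,
      card_univ, Fintype.card_fin]
  have ht : (∏ j : Fin n, (fop qv (topE j) + fcl qv (topE j))) = 1 := by
    rw [prod_congr rfl fun j _ => by rw [fop_top, fcl_top], prod_const]
    norm_num
  have hr : (∏ k : Fin (n + 1), (fop qv (rungE k) + fcl qv (rungE k))) = qv ^ (n + 1) := by
    rw [prod_congr rfl fun k _ => by rw [fop_rung, fcl_rung], prod_const,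
      card_univ, Fintype.card_fin]
    ring
  rw [hb, ht, hr]
  ring


lemma w_def (qv : ℝ) (ω : Finset (Sym2 (VV n))) :
    (∏ e ∈ EE n, if e ∈ ω then 1 - qv else 1 - (1 - qv)) = w qv ω := rfl

lemma GW_def (qv : ℝ) (ω : Finset (Sym2 (VV n))) :
    (∏ e ∈ EE n, if e ∈ ω then fop qv e else fcl qv e) = GW qv ω := rfl

end BB10


open BB10 in
/-- For the path `Pₙ` with endpoints `0` and `n`, constant edge
probability `1 - q` on the bunkbed graph gives
`P(u₋ ↔ v₋) - P(u₋ ↔ v₊) = q^(n+1) (1-q)^n`. -/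
theorem bunkbed_path_difference (n : ℕ) (qv : ℝ) (hq0 : 0 ≤ qv) (hq1 : qv ≤ 1) :
    prConn (bunkbed (SimpleGraph.pathGraph (n + 1))) (fun _ => 1 - qv)
        ((0 : Fin (n + 1)), false) (Fin.last n, false) -
      prConn (bunkbed (SimpleGraph.pathGraph (n + 1))) (fun _ => 1 - qv)
        ((0 : Fin (n + 1)), false) (Fin.last n, true) =
      qv ^ (n + 1) * (1 - qv) ^ n := by
  simp only [prConn, prEvent, BB10.edgeFinset_eq, w_def]
  rw [← sum_sub_distrib]
  rw [← sum_filter_add_sum_filter_not ((EE n).powerset) (fun ω => ∃ k, rungE k ∈ ω)]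
  have h1 : (∑ ω ∈ (EE n).powerset.filter (fun ω => ∃ k, rungE k ∈ ω),
      ((if (fromEdgeSet (↑ω : Set (Sym2 (VV n)))).Reachable ((0 : Fin (n + 1)), false)
          (Fin.last n, false) then w qv ω else 0) -
        (if (fromEdgeSet (↑ω : Set (Sym2 (VV n)))).Reachable ((0 : Fin (n + 1)), false)
          (Fin.last n, true) then w qv ω else 0))) = 0 := by
    rw [sum_sub_distrib, pair_sum qv, sub_self]
  have h2 : (∑ ω ∈ (EE n).powerset.filter (fun ω => ¬∃ k, rungE k ∈ ω),
      ((if (fromEdgeSet (↑ω : Set (Sym2 (VV n)))).Reachable ((0 : Fin (n + 1)), false)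
          (Fin.last n, false) then w qv ω else 0) -
        (if (fromEdgeSet (↑ω : Set (Sym2 (VV n)))).Reachable ((0 : Fin (n + 1)), false)
          (Fin.last n, true) then w qv ω else 0)))
      = ∑ ω ∈ (EE n).powerset.filter (fun ω => ¬∃ k, rungE k ∈ ω), GW qv ω := by
    refine sum_congr rfl fun ω hω => ?_
    rw [mem_filter, mem_powerset] at hω
    obtain ⟨hsub, hno'⟩ := hω
    push_neg at hno'
    have hB : ¬(fromEdgeSet (↑ω : Set (Sym2 (VV n)))).Reachable ((0 : Fin (n + 1)), false)
        (Fin.last n, true) := by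
      intro h
      exact Bool.false_ne_true (snd_eq_of_reachable hsub hno' h)
    rw [if_neg hB, sub_zero]
    simp only [reach_bot_iff hsub hno']
    by_cases hall : ∀ j : Fin n, botE j ∈ ω
    · rw [if_pos hall, GW_eq_w qv hno' hall]
    · push_neg at hall
      obtain ⟨j, hj⟩ := hall
      rw [if_neg (by push_neg; exact ⟨j, hj⟩), GW_nobot qv hj]
  have h12 := congrArg₂ (· + ·) h1 h2
  simp only [zero_add] at h12
  refine Eq.trans (b := ∑ ω ∈ (EE n).powerset.filter (fun ω => ¬∃ k, rungE k ∈ ω), GW qv ω)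
    ?_ ?_
  · convert h12
  have h3 : (∑ ω ∈ (EE n).powerset.filter (fun ω => ∃ k, rungE k ∈ ω), GW qv ω) = 0 :=
    sum_eq_zero fun ω hω => GW_rung qv (mem_filter.1 hω).2
  have h4 : (∑ ω ∈ (EE n).powerset.filter (fun ω => ¬∃ k, rungE k ∈ ω), GW qv ω)
      = ∑ ω ∈ (EE n).powerset, GW qv ω := by
    rw [← sum_filter_add_sum_filter_not ((EE n).powerset) (fun ω => ∃ k, rungE k ∈ ω), h3,
      zero_add]
  rw [h4]
  have h5 : (∑ ω ∈ (EE n).powerset, GW qv ω)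
      = ∏ e ∈ EE n, (fop qv e + fcl qv e) := by
    rw [← sum_powerset_prod (EE n) (fop qv) (fcl qv)]
    exact sum_congr rfl fun ω _ => (GW_def qv ω).symm
  rw [h5, prod_plus]
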